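/- Let Σ be a finite alphabet, π a permutation of Σ, and v, w ∈ Σ*. Then h_π(vw) = h_π(v) · h_{π⊙v}(w), where π⊙v = L(πv) and · denotes concatenation. -/

import Mathlib

/-- `lastOccs w = L(w)`: the word obtained from `w` by deleting every occurrence of each
letter except its last one, so it lists each letter of `Alph(w)` exactly once, ordered by
last occurrence. -/
def lastOccs {α : Type*} [DecidableEq α] (w : List α) : List α :=
  w.reverse.dedup.reverse

/-- `ind x a`: the number of distinct letters occurring in `x` strictly after the last
occurrence of `a` in `x` (for `a` occurring in `x`). -/
def ind {α : Type*} [DecidableEq α] (x : List α) (a : α) : ℕ :=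
  x.reverse.dedup.idxOf a

/-- The encoding `h_π(w)`: the word `z` with `|z| = |w|` and
`z[i] = ind_{π · w[1..i−1]} (w[i])` for `i = 1, …, |w|`. -/
def henc {α : Type*} [DecidableEq α] (π : List α) : List α → List ℕ
  | [] => []
  | a :: w => ind π a :: henc (π ++ [a]) w

lemma henc_congr {α : Type*} [DecidableEq α] {x y : List α}
    (h : x.reverse.dedup = y.reverse.dedup) (w : List α) : henc x w = henc y w := by
  induction w generalizing x y with
  | nil => rfl
  | cons a w ih =>
    simp only [henc]
    rw [show ind x a = ind y a from by simp [ind, h]]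
    congr 1
    apply ih
    simp only [List.reverse_append, List.reverse_cons, List.reverse_nil, List.nil_append,
      List.singleton_append]
    have hm : a ∈ x.reverse ↔ a ∈ y.reverse := by
      rw [← List.mem_dedup, ← List.mem_dedup (l := y.reverse), h]
    by_cases hx : a ∈ x.reverse
    · rw [List.dedup_cons_of_mem hx, List.dedup_cons_of_mem (hm.mp hx), h]
    · rw [List.dedup_cons_of_notMem hx, List.dedup_cons_of_notMem (fun hy => hx (hm.mpr hy)), h]

lemma henc_append' {α : Type*} [DecidableEq α] (π v w : List α) :
    henc π (v ++ w) = henc π v ++ henc (π ++ v) w := by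
  induction v generalizing π with
  | nil => simp [henc]
  | cons a v ih =>
    simp only [List.cons_append, henc]
    congr 1
    rw [ih, List.append_assoc, List.singleton_append]

/-- Let `π` be a permutation of the finite alphabet `Σ` and `v, w ∈ Σ*`.  Then
`h_π(vw) = h_π(v) · h_{π⊙v}(w)`, where `π⊙v = L(πv)`. -/
theorem henc_append {α : Type*} [Fintype α] [DecidableEq α] (π : List α)
    (hπ : π.Nodup ∧ ∀ a : α, a ∈ π) (v w : List α) :
    henc π (v ++ w) = henc π v ++ henc (lastOccs (π ++ v)) w := by
  rw [henc_append' π v w]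
  exact congrArg _ (henc_congr (by simp [lastOccs]) w)
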